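/- Let X be a smooth projective curve over an algebraically closed field k of characteristic zero, and let E and F be vector bundles on X with H^0(X, E ⊗ F) = 0 and H^1(X, E ⊗ F) = 0. Then E is semistable, i.e., for every nonzero subsheaf E' ⊆ E one has deg(E')/rk(E') ≤ deg(E)/rk(E'). -/

import Mathlib

/-- Abstract data of coherent sheaves / vector bundles on an irreducible smooth projective
curve over an algebraically closed field of characteristic zero: each element of `B` stands
for (the isomorphism class of) a nonzero coherent sheaf, with its degree, rank, dimensions
of cohomology `h0 = dim H^0`, `h1 = dim H^1`, tensor product, and the subsheaf relation.
The axioms record Riemann–Roch and the standard behaviour of degree, rank and `H^0`. -/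
structure CurveSheafData where
  B : Type
  deg : B → ℤ
  rk : B → ℕ
  h0 : B → ℕ
  h1 : B → ℕ
  tens : B → B → B
  Sub : B → B → Prop
  genus : ℕ
  riemannRoch : ∀ E, (h0 E : ℤ) - (h1 E : ℤ) = deg E + (rk E : ℤ) * (1 - (genus : ℤ))
  rk_tens : ∀ E F, rk (tens E F) = rk E * rk F
  deg_tens : ∀ E F, deg (tens E F) = (rk F : ℤ) * deg E + (rk E : ℤ) * deg F
  sub_tens : ∀ E' E F, Sub E' E → Sub (tens E' F) (tens E F)
  h0_mono : ∀ W' W, Sub W' W → h0 W = 0 → h0 W' = 0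

/-- The slope `μ = deg / rk` of a sheaf. -/
def CurveSheafData.slope (C : CurveSheafData) (E : C.B) : ℚ :=
  (C.deg E : ℚ) / (C.rk E : ℚ)

/-- **Faltings' criterion, easy direction.** If `E` and `F` are vector bundles on a smooth
projective curve `X` with `H^0(X, E ⊗ F) = 0 = H^1(X, E ⊗ F)`, then `E` is semistable:
every nonzero subsheaf `E' ⊆ E` satisfies `deg E' / rk E' ≤ deg E / rk E`. -/
theorem semistable_of_cohomology_vanishing (C : CurveSheafData) (E F : C.B)
    (hrkE : 0 < C.rk E) (hrkF : 0 < C.rk F)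
    (hH0 : C.h0 (C.tens E F) = 0) (hH1 : C.h1 (C.tens E F) = 0) :
    ∀ E', C.Sub E' E → 0 < C.rk E' → C.slope E' ≤ C.slope E := by
  intro E' hsub hrkE'
  -- χ(E ⊗ F) = 0
  have hE := C.riemannRoch (C.tens E F)
  rw [hH0, hH1, C.rk_tens, C.deg_tens] at hE
  -- h⁰(E' ⊗ F) = 0
  have hh0 : C.h0 (C.tens E' F) = 0 :=
    C.h0_mono _ _ (C.sub_tens E' E F hsub) hH0
  have hE' := C.riemannRoch (C.tens E' F)
  rw [hh0, C.rk_tens, C.deg_tens] at hE'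
  have hle : ((C.rk F : ℤ) * C.deg E' + (C.rk E' : ℤ) * C.deg F)
      + ((C.rk E' : ℤ) * (C.rk F : ℤ)) * (1 - (C.genus : ℤ)) ≤ 0 := by
    push_cast at hE' ⊢
    have : (0 : ℤ) ≤ (C.h1 (C.tens E' F) : ℤ) := Int.ofNat_nonneg _
    linarith
  have heq : ((C.rk F : ℤ) * C.deg E + (C.rk E : ℤ) * C.deg F)
      + ((C.rk E : ℤ) * (C.rk F : ℤ)) * (1 - (C.genus : ℤ)) = 0 := by
    push_cast at hE
    linarith
  have hkey : (C.deg E') * (C.rk E : ℤ) ≤ (C.deg E) * (C.rk E' : ℤ) := by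
    have hF : (0 : ℤ) < (C.rk F : ℤ) := Int.natCast_pos.mpr hrkF
    have hE'' : (0 : ℤ) ≤ (C.rk E' : ℤ) := Int.ofNat_nonneg _
    have hEpos : (0 : ℤ) ≤ (C.rk E : ℤ) := Int.ofNat_nonneg _
    nlinarith [mul_le_mul_of_nonneg_left hle hEpos,
      mul_le_mul_of_nonneg_left (le_of_eq heq) hE'']
  unfold CurveSheafData.slope
  rw [div_le_div_iff₀ (by exact_mod_cast hrkE') (by exact_mod_cast hrkE)]
  exact_mod_cast hkey
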